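/- Let q > 2 and n ≥ 1 be integers. For a function f : ℤ_q^n → ℤ_q, define N′_f(u) = q^{−n/2} Σ_{x ∈ ℤ_q^n} ξ^{f(x)} ξ^{⟨x̂,û⟩} ω^{Σ_i x̂_i} for u ∈ ℤ_q^n, where ξ^{f(x)} means ξ raised to the canonical representative of f(x). Then there is no affine function f : ℤ_q^n → ℤ_q, i.e. a function of the form f(x) = ⟨a,x⟩ + b with a ∈ ℤ_q^n and b ∈ ℤ_q (inner product and addition in ℤ_q), such that |N′_f(u)| = 1 for all u ∈ ℤ_q^n. -/

import Mathlib

open Finset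

/-- `ω = e^{πi/q}`, a primitive `2q`-th root of unity. -/
noncomputable def omg (q : ℕ) : ℂ := Complex.exp ((Real.pi : ℂ) * Complex.I / q)

/-- `ξ = e^{2πi/q}`, a primitive `q`-th root of unity. -/
noncomputable def xiq (q : ℕ) : ℂ := Complex.exp (2 * (Real.pi : ℂ) * Complex.I / q)

/-- The `2q`-nega-Hadamard transform of `f : ℤ_q^n → ℤ_{2q}` at `u ∈ ℤ_q^n`:
`N_f(u) = q^{-n/2} Σ_x ω^{f(x)} ξ^{⟨x̂,û⟩} ω^{Σ_i x̂_i}`. -/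
noncomputable def NHT (q n : ℕ) [NeZero q] (f : (Fin n → ZMod q) → ZMod (2 * q))
    (u : Fin n → ZMod q) : ℂ :=
  (Real.sqrt ((q : ℝ) ^ n) : ℂ)⁻¹ *
    ∑ x : Fin n → ZMod q,
      omg q ^ (f x).val * xiq q ^ (∑ i, (x i).val * (u i).val) * omg q ^ (∑ i, (x i).val)

/-- The `2q`-nega-crosscorrelation of `f, g : ℤ_q^m → ℤ_{2q}` at `u`:
`C_{f,g}(u) = Σ_x ω^{f(x) − g(x+u)} (−1)^{n_q(x̂,û)}`. -/
noncomputable def negaCC (q m : ℕ) [NeZero q]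
    (f g : (Fin m → ZMod q) → ZMod (2 * q)) (u : Fin m → ZMod q) : ℂ :=
  ∑ x : Fin m → ZMod q,
    omg q ^ (f x - g (x + u)).val *
      (-1 : ℂ) ^ (Finset.univ.filter (fun i => q ≤ (x i).val + (u i).val)).card

/-- The `q`-ary nega-Hadamard transform `N′_f(u) = q^{−n/2} Σ_x ξ^{f(x)} ξ^{⟨x̂,û⟩} ω^{Σ_i x̂_i}`
of `f : ℤ_q^n → ℤ_q`. -/
noncomputable def NHTq (q n : ℕ) [NeZero q] (f : (Fin n → ZMod q) → ZMod q)
    (u : Fin n → ZMod q) : ℂ :=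
  (Real.sqrt ((q : ℝ) ^ n) : ℂ)⁻¹ *
    ∑ x : Fin n → ZMod q,
      xiq q ^ (f x).val * xiq q ^ (∑ i, (x i).val * (u i).val) * omg q ^ (∑ i, (x i).val)

lemma xiq_pow_q (q : ℕ) [NeZero q] : xiq q ^ q = 1 := by
  have hq : (q : ℂ) ≠ 0 := Nat.cast_ne_zero.2 (NeZero.ne q)
  rw [xiq, ← Complex.exp_nat_mul]
  rw [show (q : ℂ) * (2 * (Real.pi : ℂ) * Complex.I / q) = 2 * Real.pi * Complex.I by
    field_simp]
  exact Complex.exp_two_pi_mul_I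

lemma omg_pow_q (q : ℕ) [NeZero q] : omg q ^ q = -1 := by
  have hq : (q : ℂ) ≠ 0 := Nat.cast_ne_zero.2 (NeZero.ne q)
  rw [omg, ← Complex.exp_nat_mul]
  rw [show (q : ℂ) * ((Real.pi : ℂ) * Complex.I / q) = Real.pi * Complex.I by field_simp]
  exact Complex.exp_pi_mul_I

lemma xiq_val_add (q : ℕ) [NeZero q] (y z : ZMod q) :
    xiq q ^ (y + z).val = xiq q ^ y.val * xiq q ^ z.val := by
  rw [← pow_add, ZMod.val_add, ← pow_eq_pow_mod _ (xiq_pow_q q)]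

lemma xiq_val_mul (q : ℕ) [NeZero q] (c t : ZMod q) :
    xiq q ^ (c * t).val = (xiq q ^ c.val) ^ t.val := by
  rw [← pow_mul, ZMod.val_mul, ← pow_eq_pow_mod _ (xiq_pow_q q)]

lemma xiq_val_sum (q : ℕ) [NeZero q] {ι : Type*} (s : Finset ι) (f : ι → ZMod q) :
    xiq q ^ (∑ i ∈ s, f i).val = ∏ i ∈ s, xiq q ^ (f i).val := by
  classical
  induction s using Finset.induction_on with
  | empty => simp
  | insert _ _ h ih =>
    rw [Finset.sum_insert h, Finset.prod_insert h, xiq_val_add, ih]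

lemma NHTq_affine (q n : ℕ) [NeZero q] (a : Fin n → ZMod q) (b : ZMod q)
    (u : Fin n → ZMod q) :
    NHTq q n (fun x => (∑ i, a i * x i) + b) u =
      (Real.sqrt ((q : ℝ) ^ n) : ℂ)⁻¹ * xiq q ^ b.val *
        ∏ i, ∑ t : ZMod q, (xiq q ^ (a i + u i).val * omg q) ^ t.val := by
  rw [NHTq, mul_assoc]
  congr 1
  have key := Fintype.prod_sum (fun (i : Fin n) (t : ZMod q) =>
    (xiq q ^ (a i + u i).val * omg q) ^ t.val)
  rw [key, Finset.mul_sum]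
  refine Finset.sum_congr rfl fun x _ => ?_
  rw [xiq_val_add, xiq_val_sum, ← Finset.prod_pow_eq_pow_sum, ← Finset.prod_pow_eq_pow_sum]
  have hprod : ∏ i, (xiq q ^ (a i + u i).val * omg q) ^ (x i).val =
      (∏ i, xiq q ^ (a i * x i).val) * (∏ i, xiq q ^ ((x i).val * (u i).val)) *
        ∏ i, omg q ^ (x i).val := by
    rw [← Finset.prod_mul_distrib, ← Finset.prod_mul_distrib]
    refine Finset.prod_congr rfl fun i _ => ?_
    rw [xiq_val_mul, xiq_val_add, mul_comm ((x i).val) ((u i).val), pow_mul]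
    ring
  rw [hprod]
  ring

lemma geom_eval (q : ℕ) [NeZero q] (c : ZMod q) :
    ∑ t : ZMod q, (xiq q ^ c.val * omg q) ^ t.val =
      -2 / (xiq q ^ c.val * omg q - 1) := by
  set r : ℂ := xiq q ^ c.val * omg q with hr
  have hrq : r ^ q = -1 := by
    rw [hr, mul_pow, ← pow_mul, mul_comm c.val q, pow_mul, xiq_pow_q, one_pow, one_mul,
      omg_pow_q]
  have hr1 : r ≠ 1 := by
    intro h; rw [h, one_pow] at hrq; norm_num at hrq
  have hsum : ∑ t : ZMod q, r ^ t.val = ∑ i ∈ Finset.range q, r ^ i := by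
    rcases Nat.exists_eq_succ_of_ne_zero (NeZero.ne q) with ⟨k, rfl⟩
    exact Fin.sum_univ_eq_sum_range (fun i => r ^ i) (k + 1)
  rw [hsum, geom_sum_eq hr1, hrq]
  norm_num

lemma normSq_exp_sub_one (θ : ℝ) :
    Complex.normSq (Complex.exp ((θ : ℂ) * Complex.I) - 1) = 2 - 2 * Real.cos θ := by
  have h : Complex.exp ((θ : ℂ) * Complex.I) - 1 =
      ((Real.cos θ - 1 : ℝ) : ℂ) + ((Real.sin θ : ℝ) : ℂ) * Complex.I := by
    rw [Complex.exp_mul_I]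
    push_cast
    ring
  rw [h, Complex.normSq_add_mul_I]
  nlinarith [Real.sin_sq_add_cos_sq θ]

lemma abs_G (q : ℕ) [NeZero q] (c : ZMod q) :
    ‖∑ t : ZMod q, (xiq q ^ c.val * omg q) ^ t.val‖ =
      2 / ‖xiq q ^ c.val * omg q - 1‖ := by
  rw [geom_eval, norm_div]
  norm_num

lemma r_pow_q (q : ℕ) [NeZero q] (c : ZMod q) :
    (xiq q ^ c.val * omg q) ^ q = -1 := by
  rw [mul_pow, ← pow_mul, mul_comm c.val q, pow_mul, xiq_pow_q, one_pow, one_mul, omg_pow_q]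

lemma r_ne_one (q : ℕ) [NeZero q] (c : ZMod q) : xiq q ^ c.val * omg q ≠ 1 := by
  intro h
  have := r_pow_q q c
  rw [h, one_pow] at this
  norm_num at this


/-- For `q > 2`, no affine function `f(x) = ⟨a,x⟩ + b` from `ℤ_q^n` to `ℤ_q`
satisfies `|N′_f(u)| = 1` for all `u ∈ ℤ_q^n`. -/
theorem no_affine_q_negabent (q n : ℕ) [NeZero q] (hq : 2 < q) (hn : 1 ≤ n) :
    ¬ ∃ (a : Fin n → ZMod q) (b : ZMod q),
        ∀ u : Fin n → ZMod q,
          ‖NHTq q n (fun x => (∑ i, a i * x i) + b) u‖ = 1 := by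
  rintro ⟨a, b, h⟩
  haveI : Fact (1 < q) := ⟨by omega⟩
  set G : ZMod q → ℂ := fun c => ∑ t : ZMod q, (xiq q ^ c.val * omg q) ^ t.val with hG
  set i0 : Fin n := ⟨0, hn⟩
  have h1 := h (fun j => -a j)
  have h2 := h (Function.update (fun j => -a j) i0 (1 - a i0))
  rw [NHTq_affine] at h1 h2
  have hp1 : (∏ i, ∑ t : ZMod q, (xiq q ^ (a i + (fun j => -a j) i).val * omg q) ^ t.val)
      = G 0 ^ n := by
    have : ∀ i ∈ univ,
        (∑ t : ZMod q, (xiq q ^ (a i + (fun j => -a j) i).val * omg q) ^ t.val) = G 0 := by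
      intro i _; simp [hG]
    rw [Finset.prod_congr rfl this, Finset.prod_const, Finset.card_univ, Fintype.card_fin]
  have hcard : (univ \ {i0} : Finset (Fin n)).card = n - 1 := by
    rw [Finset.card_sdiff_of_subset (by simp), Finset.card_singleton, Finset.card_univ, Fintype.card_fin]
  have hp2 : (∏ i, ∑ t : ZMod q,
      (xiq q ^ (a i + Function.update (fun j => -a j) i0 (1 - a i0) i).val * omg q) ^ t.val)
      = G 1 * G 0 ^ (n - 1) := by
    have hval : ∀ i ∈ univ, (∑ t : ZMod q,
        (xiq q ^ (a i + Function.update (fun j => -a j) i0 (1 - a i0) i).val * omg q) ^ t.val)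
        = G (if i = i0 then 1 else 0) := by
      intro i _
      rcases eq_or_ne i i0 with rfl | hi
      · rw [if_pos rfl, hG]
        simp [Function.update_self]
      · rw [if_neg hi, hG]
        simp [Function.update_of_ne hi]
    rw [Finset.prod_congr rfl hval,
      Finset.prod_eq_mul_prod_sdiff_singleton_of_mem (Finset.mem_univ i0), if_pos rfl]
    congr 1
    have : ∀ i ∈ univ \ {i0}, G (if i = i0 then 1 else 0) = G 0 := by
      intro i hi
      rw [if_neg (by simpa using (Finset.mem_sdiff.1 hi).2)]
    rw [Finset.prod_congr rfl this, Finset.prod_const, hcard]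
  rw [hp1] at h1
  rw [hp2] at h2
  -- take absolute values apart
  simp only [norm_mul, norm_pow] at h1 h2
  set A : ℝ := ‖(Real.sqrt ((q : ℝ) ^ n) : ℂ)⁻¹‖ * ‖xiq q‖ ^ b.val
    with hA
  -- deduce |G 0| = |G 1|
  have hGeq : ‖G 0‖ = ‖G 1‖ := by
    have hn' : n = (n - 1) + 1 := by omega
    have e1 : A * ‖G 0‖ ^ (n - 1) * ‖G 0‖ = 1 := by
      rw [mul_assoc, ← pow_succ, ← hn']; exact h1
    have e2 : A * ‖G 0‖ ^ (n - 1) * ‖G 1‖ = 1 := by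
      rw [mul_assoc, mul_comm (‖G 0‖ ^ (n - 1))]; exact h2
    have hne : A * ‖G 0‖ ^ (n - 1) ≠ 0 := by
      intro h0; rw [h0, zero_mul] at e1; norm_num at e1
    exact mul_left_cancel₀ hne (e1.trans e2.symm)
  -- compute both abs values
  have habs0 : ‖G 0‖ = 2 / ‖omg q - 1‖ := by
    rw [hG]
    have := abs_G q (0 : ZMod q)
    simpa [ZMod.val_zero] using this
  have habs1 : ‖G 1‖ = 2 / ‖xiq q * omg q - 1‖ := by
    rw [hG]
    have := abs_G q (1 : ZMod q)
    simpa [ZMod.val_one] using this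
  have hr0 : omg q - 1 ≠ 0 := by
    have := r_ne_one q (0 : ZMod q)
    simp [ZMod.val_zero] at this
    exact sub_ne_zero.2 this
  have hr1 : xiq q * omg q - 1 ≠ 0 := by
    have := r_ne_one q (1 : ZMod q)
    simp [ZMod.val_one] at this
    exact sub_ne_zero.2 this
  have habsne : ‖omg q - 1‖ = ‖xiq q * omg q - 1‖ := by
    rw [habs0, habs1] at hGeq
    have ha : ‖omg q - 1‖ ≠ 0 := norm_ne_zero_iff.mpr hr0
    have hb : ‖xiq q * omg q - 1‖ ≠ 0 := norm_ne_zero_iff.mpr hr1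
    field_simp at hGeq
    rw [mul_comm (omg q) (xiq q), eq_div_iff hb] at hGeq
    linarith
  -- turn into normSq equality, then cosine equality
  have hqC : (q : ℂ) ≠ 0 := Nat.cast_ne_zero.2 (NeZero.ne q)
  have hω : omg q = Complex.exp (((Real.pi / q : ℝ) : ℂ) * Complex.I) := by
    rw [omg]; congr 1; push_cast; ring
  have hξω : xiq q * omg q = Complex.exp (((3 * Real.pi / q : ℝ) : ℂ) * Complex.I) := by
    rw [xiq, omg, ← Complex.exp_add]; congr 1; push_cast; field_simp; ring
  have hns : Complex.normSq (omg q - 1) = Complex.normSq (xiq q * omg q - 1) := by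
    rw [← Complex.sq_norm, ← Complex.sq_norm, habsne]
  rw [hξω, hω, normSq_exp_sub_one, normSq_exp_sub_one] at hns
  have hcos : Real.cos (Real.pi / q) = Real.cos (3 * Real.pi / q) := by linarith
  have hqR : (0 : ℝ) < q := by positivity
  have hqR3 : (3 : ℝ) ≤ q := by exact_mod_cast hq
  have hpi := Real.pi_pos
  have hmem1 : Real.pi / q ∈ Set.Icc 0 Real.pi := by
    constructor
    · positivity
    · rw [div_le_iff₀ hqR]; nlinarith
  have hmem2 : 3 * Real.pi / q ∈ Set.Icc 0 Real.pi := by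
    constructor
    · positivity
    · rw [div_le_iff₀ hqR]; nlinarith
  have := Real.injOn_cos hmem1 hmem2 hcos
  rw [div_eq_div_iff hqR.ne' hqR.ne'] at this
  nlinarith
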